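/- Let n ≥ 2, Λ = (λ₁,…,λ_n) ∈ ℝⁿ and |Λ| = λ₁+⋯+λ_n. Let F be a smooth function on (0,∞)ⁿ and define g = F ∘ θ_n on (0,∞) × D_{n−1}. Then for every t > 0 and v ∈ D_{n−1}: (𝓑_Λ F)(θ_n(t,v)) = t·∂²g/∂t²(t,v) + |Λ|·∂g/∂t(t,v) + (1/t)·[ Σ_{i=1}^{n−1} v_i(1−v_i)·∂²g/∂v_i²(t,v) − 2 Σ_{1≤i<j≤n−1} v_i v_j·∂²g/∂v_i∂v_j(t,v) + Σ_{i=1}^{n−1} (λ_i − |Λ| v_i)·∂g/∂v_i(t,v) ]. -/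

import Mathlib

open MeasureTheory Finset

noncomputable section

/-- Sum of the first `m` coordinates of `x`. -/
def psum {n : ℕ} (x : Fin n → ℝ) (m : ℕ) : ℝ :=
  ∑ j : Fin n, if (j : ℕ) < m then x j else 0

/-- The open simplex `D_n`. -/
def simplexD (n : ℕ) : Set (Fin n → ℝ) := {x | (∀ i, 0 < x i) ∧ psum x n < 1}

/-- Partial derivative in the `i`-th coordinate direction. -/
def pderiv1 {m : ℕ} (i : Fin m) (F : (Fin m → ℝ) → ℝ) : (Fin m → ℝ) → ℝ :=
  fun x => fderiv ℝ F x (Pi.single i 1)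

/-- The stratification map `θ_n(t,v) = (tv₁, …, tv_{n-1}, t(1-|v|))`. -/
def strTheta (n : ℕ) (t : ℝ) (v : Fin (n - 1) → ℝ) : Fin n → ℝ :=
  fun j => if h : (j : ℕ) < n - 1 then t * v ⟨j, h⟩ else t * (1 - ∑ i, v i)

/-- The Bessel operator `𝓑_Λ F(x) = Σᵢ (xᵢ ∂²F/∂xᵢ² + λᵢ ∂F/∂xᵢ)`. -/
def besselOp {n : ℕ} (Λ : Fin n → ℝ) (F : (Fin n → ℝ) → ℝ) (x : Fin n → ℝ) : ℝ :=
  ∑ i : Fin n, (x i * pderiv1 i (pderiv1 i F) x + Λ i * pderiv1 i F x)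

lemma offdiag_sum {M : ℕ} (f : Fin M → Fin M → ℝ) (hf : ∀ i j, f i j = f j i) :
    2 * (∑ i, ∑ j, if i < j then f i j else 0)
      = (∑ i, ∑ j, f i j) - ∑ i, f i i := by
  have h1 : (∑ i, ∑ j, f i j)
      = (∑ i, ∑ j, if i < j then f i j else 0)
        + ((∑ i, ∑ j, if j < i then f i j else 0) + ∑ i, f i i) := by
    rw [← Finset.sum_add_distrib, ← Finset.sum_add_distrib]
    refine Finset.sum_congr rfl fun i _ => ?_
    rw [show f i i = ∑ j, if i = j then f i j else 0 by simp,
      ← Finset.sum_add_distrib, ← Finset.sum_add_distrib]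
    refine Finset.sum_congr rfl fun j _ => ?_
    rcases lt_trichotomy i j with h | h | h
    · simp [h, lt_asymm h, h.ne]
    · simp [h]
    · simp [h, lt_asymm h, h.ne']
  have h2 : (∑ i, ∑ j, if j < i then f i j else 0)
      = ∑ i, ∑ j, if i < j then f i j else 0 := by
    rw [Finset.sum_comm]
    exact Finset.sum_congr rfl fun i _ => Finset.sum_congr rfl fun j _ => by rw [hf]
  rw [h2] at h1
  linarith

set_option maxHeartbeats 2000000 in
theorem stmt1 (n : ℕ) (hn : 2 ≤ n) (Λ : Fin n → ℝ) (F : (Fin n → ℝ) → ℝ)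
    (hF : ContDiffOn ℝ ((⊤ : ℕ∞) : WithTop ℕ∞) F {x : Fin n → ℝ | ∀ i, 0 < x i}) :
    ∀ t : ℝ, 0 < t → ∀ v ∈ simplexD (n - 1),
      besselOp Λ F (strTheta n t v)
        = t * deriv (deriv fun s => F (strTheta n s v)) t
          + (∑ i, Λ i) * deriv (fun s => F (strTheta n s v)) t
          + (1 / t) *
            ((∑ i : Fin (n - 1),
                v i * (1 - v i) * pderiv1 i (pderiv1 i fun w => F (strTheta n t w)) v)
              - 2 * (∑ i : Fin (n - 1), ∑ j : Fin (n - 1),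
                  if i < j then
                    v i * v j * pderiv1 i (pderiv1 j fun w => F (strTheta n t w)) v
                  else 0)
              + ∑ i : Fin (n - 1),
                  (Λ (Fin.castLE (Nat.sub_le n 1) i) - (∑ l, Λ l) * v i) *
                    pderiv1 i (fun w => F (strTheta n t w)) v) := by
  obtain ⟨m, rfl⟩ : ∃ m, n = m + 1 := ⟨n - 1, by omega⟩
  intro t ht v hv
  have hσ1 : (∑ i, v i) < 1 := by
    have h := hv.2
    unfold psum at h
    calc (∑ i, v i) = ∑ j : Fin (m + 1 - 1), if (j : ℕ) < m + 1 - 1 then v j else 0 :=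
      (Finset.sum_congr rfl fun j _ => by rw [if_pos j.is_lt]).symm
    _ < 1 := h
  have hv1 : ∀ i, 0 < v i := hv.1
  set U : Set (Fin (m + 1) → ℝ) := {x | ∀ i, 0 < x i} with hUdef
  have hU : IsOpen U := by
    have : U = ⋂ i, {x : Fin (m + 1) → ℝ | 0 < x i} := by
      ext x; simp [hUdef, Set.mem_iInter]
    rw [this]
    exact isOpen_iInter_of_finite fun i =>
      isOpen_lt continuous_const (continuous_apply i)
  -- the ray direction `c`
  set c : Fin (m + 1) → ℝ :=
    fun j => if h : (j : ℕ) < m + 1 - 1 then v ⟨j, h⟩ else 1 - ∑ i, v i with hcdef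
  have hθt : ∀ s : ℝ, strTheta (m + 1) s v = s • c := by
    intro s; funext j
    simp only [strTheta, hcdef, Pi.smul_apply, smul_eq_mul]
    by_cases h : (j : ℕ) < m + 1 - 1 <;> simp [h]
  have hc : ∀ j, 0 < c j := by
    intro j; rw [hcdef]; dsimp only
    split
    · exact hv1 _
    · linarith
  have hsU : ∀ s : ℝ, 0 < s → s • c ∈ U := by
    intro s hs i
    exact mul_pos hs (hc i)
  have hx₀U : strTheta (m + 1) t v ∈ U := by rw [hθt]; exact hsU t ht
  -- the affine structure in `w`
  set T₀ : (Fin (m + 1 - 1) → ℝ) →L[ℝ] (Fin (m + 1) → ℝ) :=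
    ContinuousLinearMap.pi (fun j : Fin (m + 1) =>
      if h : (j : ℕ) < m + 1 - 1 then ContinuousLinearMap.proj ⟨j, h⟩
      else -(∑ i : Fin (m + 1 - 1), ContinuousLinearMap.proj i)) with hT₀def
  have hT₀app : ∀ (w : Fin (m + 1 - 1) → ℝ) (j : Fin (m + 1)),
      T₀ w j = if h : (j : ℕ) < m + 1 - 1 then w ⟨j, h⟩ else -(∑ i, w i) := by
    intro w j
    rw [hT₀def, ContinuousLinearMap.pi_apply]
    split <;> simp
  set b : Fin (m + 1) → ℝ := fun j => if (j : ℕ) < m + 1 - 1 then 0 else t with hbdef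
  have hθw : ∀ w, strTheta (m + 1) t w = (t • T₀) w + b := by
    intro w; funext j
    simp only [strTheta, Pi.add_apply, ContinuousLinearMap.smul_apply, Pi.smul_apply,
      smul_eq_mul, hT₀app, hbdef]
    split_ifs with h <;> ring
  have hA : ∀ w, HasFDerivAt (fun w => strTheta (m + 1) t w) (t • T₀ :
      (Fin (m + 1 - 1) → ℝ) →L[ℝ] (Fin (m + 1) → ℝ)) w := by
    intro w
    have heq : (fun w => strTheta (m + 1) t w) = fun w => (t • T₀) w + b := funext hθw
    rw [heq]
    exact (t • T₀).hasFDerivAt.add_const b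
  set u : Fin (m + 1 - 1) → (Fin (m + 1) → ℝ) := fun i => T₀ (Pi.single i 1) with hudef
  -- differentiability facts
  have hmem : ∀ x ∈ U, ContDiffAt ℝ ((⊤ : ℕ∞) : WithTop ℕ∞) F x :=
    fun x hx => hF.contDiffAt (hU.mem_nhds hx)
  have hFd : ∀ x ∈ U, DifferentiableAt ℝ F x :=
    fun x hx => (hmem x hx).differentiableAt (by norm_cast)
  have hFd1 : DifferentiableAt ℝ (fderiv ℝ F) (strTheta (m + 1) t v) :=
    ((hmem _ hx₀U).fderiv_right (m := 1) (by norm_cast)).differentiableAt one_ne_zero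
  set L : (Fin (m + 1) → ℝ) →L[ℝ] ℝ := fderiv ℝ F (strTheta (m + 1) t v) with hLdef
  set B := fderiv ℝ (fderiv ℝ F) (strTheta (m + 1) t v) with hBdef
  have hFF : HasFDerivAt (fderiv ℝ F) B (strTheta (m + 1) t v) := hFd1.hasFDerivAt
  have hev : ∀ᶠ y in nhds (strTheta (m + 1) t v), HasFDerivAt F (fderiv ℝ F y) y :=
    (hU.eventually_mem hx₀U).mono fun y hy => (hFd y hy).hasFDerivAt
  have hsym : ∀ a b, B a b = B b a := second_derivative_symmetric_of_eventually hev hFF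
  -- first derivative in t
  have hdt : ∀ s : ℝ, 0 < s →
      HasDerivAt (fun s' => F (strTheta (m + 1) s' v)) (fderiv ℝ F (s • c) c) s := by
    intro s hs
    have h1 : HasDerivAt (fun s' : ℝ => s' • c) c s := by
      simpa using (hasDerivAt_id s).smul_const c
    have h2 := ((hFd _ (hsU s hs)).hasFDerivAt).comp_hasDerivAt s h1
    have heq : (fun s' => F (strTheta (m + 1) s' v)) = F ∘ fun s' : ℝ => s' • c := by
      funext s'; simp [hθt s']
    rw [heq]
    exact h2
  have hd1 : deriv (fun s => F (strTheta (m + 1) s v)) t = L c := by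
    rw [(hdt t ht).deriv, hLdef, hθt]
  -- second derivative in t
  have hd2 : deriv (deriv fun s => F (strTheta (m + 1) s v)) t = B c c := by
    have hev2 : deriv (fun s => F (strTheta (m + 1) s v)) =ᶠ[nhds t]
        fun s => fderiv ℝ F (s • c) c := by
      filter_upwards [eventually_gt_nhds ht] with s hs
      exact (hdt s hs).deriv
    rw [hev2.deriv_eq]
    have h1 : HasDerivAt (fun s' : ℝ => s' • c) c t := by
      simpa using (hasDerivAt_id t).smul_const c
    have h2 : HasFDerivAt (fun x => fderiv ℝ F x c)
        ((ContinuousLinearMap.apply ℝ ℝ c).comp B) (t • c) := by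
      have := (ContinuousLinearMap.apply ℝ ℝ c).hasFDerivAt.comp
        (strTheta (m + 1) t v) hFF
      rw [hθt] at this
      simpa [Function.comp_def] using this
    have h3 := h2.comp_hasDerivAt t h1
    have h4 : HasDerivAt (fun s => fderiv ℝ F (s • c) c)
        (((ContinuousLinearMap.apply ℝ ℝ c).comp B) c) t := h3
    rw [h4.deriv]
    simp
  -- first derivatives in v
  have hθvU : ∀ᶠ w in nhds v, strTheta (m + 1) t w ∈ U := by
    have hcont : Continuous fun w => strTheta (m + 1) t w := by
      have heq : (fun w => strTheta (m + 1) t w) = fun w => (t • T₀) w + b := funext hθw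
      rw [heq]
      exact ((t • T₀).continuous).add continuous_const
    exact hcont.continuousAt.eventually_mem (hU.mem_nhds hx₀U)
  have hp1 : ∀ w, strTheta (m + 1) t w ∈ U → ∀ i : Fin (m + 1 - 1),
      pderiv1 i (fun w => F (strTheta (m + 1) t w)) w
        = t * fderiv ℝ F (strTheta (m + 1) t w) (u i) := by
    intro w hw i
    show fderiv ℝ (fun w => F (strTheta (m + 1) t w)) w (Pi.single i 1) = _
    have hder : HasFDerivAt (fun w => F (strTheta (m + 1) t w))
        ((fderiv ℝ F (strTheta (m + 1) t w)).comp (t • T₀)) w := by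
      have := ((hFd _ hw).hasFDerivAt).comp w (hA w)
      simpa [Function.comp_def] using this
    rw [hder.fderiv]
    simp [hudef, _root_.map_smul]
  -- second derivatives in v
  have hp2 : ∀ i j : Fin (m + 1 - 1),
      pderiv1 i (pderiv1 j fun w => F (strTheta (m + 1) t w)) v
        = t * (t * B (u i) (u j)) := by
    intro i j
    have heq : pderiv1 j (fun w => F (strTheta (m + 1) t w)) =ᶠ[nhds v]
        fun w => t * fderiv ℝ F (strTheta (m + 1) t w) (u j) := by
      filter_upwards [hθvU] with w hw
      exact hp1 w hw j
    show fderiv ℝ (pderiv1 j fun w => F (strTheta (m + 1) t w)) v (Pi.single i 1) = _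
    rw [heq.fderiv_eq]
    have h2 : HasFDerivAt (fun w => fderiv ℝ F (strTheta (m + 1) t w) (u j))
        (((ContinuousLinearMap.apply ℝ ℝ (u j)).comp B).comp (t • T₀)) v := by
      have := ((ContinuousLinearMap.apply ℝ ℝ (u j)).hasFDerivAt.comp
        (strTheta (m + 1) t v) hFF).comp v (hA v)
      simpa [Function.comp_def] using this
    have h3 := h2.const_mul t
    rw [h3.fderiv]
    simp [hudef, _root_.map_smul, mul_assoc]
  -- Bessel operator terms
  have hb1 : ∀ k, pderiv1 k F (strTheta (m + 1) t v) = L (Pi.single k 1) := fun k => rfl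
  have hb2 : ∀ k, pderiv1 k (pderiv1 k F) (strTheta (m + 1) t v)
      = B (Pi.single k 1) (Pi.single k 1) := by
    intro k
    show fderiv ℝ (fun x => fderiv ℝ F x (Pi.single k 1)) (strTheta (m + 1) t v)
      (Pi.single k 1) = _
    have h2 : HasFDerivAt (fun x => fderiv ℝ F x (Pi.single k 1))
        ((ContinuousLinearMap.apply ℝ ℝ (Pi.single k 1)).comp B) (strTheta (m + 1) t v) := by
      simpa [Function.comp_def] using
        (ContinuousLinearMap.apply ℝ ℝ (Pi.single k 1)).hasFDerivAt.comp
          (strTheta (m + 1) t v) hFF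
    rw [h2.fderiv]
    rfl
  -- ALGEBRA PART
  -- `u i` in terms of basis vectors
  have hu : ∀ i : Fin (m + 1 - 1),
      u i = (Pi.single (Fin.castSucc i) (1:ℝ) : Fin (m + 1) → ℝ)
        - Pi.single (Fin.last m) (1:ℝ) := by
    intro i; funext j
    rw [hudef]; dsimp only
    rw [hT₀app]
    rcases Nat.lt_or_ge (j : ℕ) (m + 1 - 1) with h | h
    · rw [dif_pos h]
      have hjl : (j : ℕ) ≠ m := by omega
      simp [Pi.single_apply, Fin.ext_iff, hjl]
    · rw [dif_neg (by omega)]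
      have hjl' : j = Fin.last m := by
        simp only [Fin.ext_iff, Fin.val_last]; have := j.is_lt; omega
      have hji' : j ≠ Fin.castSucc i := by
        intro hcontra
        have hval : (j : ℕ) = (i : ℕ) := by simpa using congrArg Fin.val hcontra
        have := i.is_lt; omega
      rw [Pi.sub_apply, Pi.single_eq_of_ne hji', hjl', Pi.single_eq_same]
      norm_num
  -- decomposition of `c`
  have hcu : c = (∑ i, v i • u i) + Pi.single (Fin.last m) (1:ℝ) := by
    funext j
    rw [hcdef]; dsimp only
    rw [Pi.add_apply, Finset.sum_apply]
    simp only [Pi.smul_apply, smul_eq_mul]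
    have huj : ∀ i : Fin (m + 1 - 1),
        u i j = if h : (j : ℕ) < m + 1 - 1 then (Pi.single i (1:ℝ) : Fin (m + 1 - 1) → ℝ) ⟨j, h⟩ else -1 := by
      intro i; rw [hudef]; dsimp only; rw [hT₀app]
      split
      · rfl
      · norm_num
    rcases Nat.lt_or_ge (j : ℕ) (m + 1 - 1) with h | h
    · rw [dif_pos h]
      have hsum : (∑ i, v i * u i j) = v ⟨j, h⟩ := by
        rw [Finset.sum_congr rfl (fun i _ => by rw [huj i, dif_pos h])]
        simp [Pi.single_apply]
      have hjl : j ≠ Fin.last m := by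
        intro hcontra
        have : (j : ℕ) = m := by simpa using congrArg Fin.val hcontra
        omega
      rw [hsum, Pi.single_eq_of_ne hjl]
      ring
    · rw [dif_neg (by omega)]
      have hsum : (∑ i, v i * u i j) = -(∑ i, v i) := by
        rw [Finset.sum_congr rfl (fun i _ => by rw [huj i, dif_neg (by omega)])]
        simp [Finset.sum_neg_distrib]
      have hjl : j = Fin.last m := by
        simp only [Fin.ext_iff, Fin.val_last]; have := j.is_lt; omega
      rw [hsum, hjl, Pi.single_eq_same]
      ring
  -- cross identity
  have hcross : ∀ i : Fin (m + 1 - 1),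
      B (u i) (u i) + (B (u i) (Pi.single (Fin.last m) (1:ℝ))
          + B (Pi.single (Fin.last m) (1:ℝ)) (u i))
        = B (Pi.single (Fin.castSucc i) (1:ℝ)) (Pi.single (Fin.castSucc i) (1:ℝ))
          - B (Pi.single (Fin.last m) (1:ℝ)) (Pi.single (Fin.last m) (1:ℝ)) := by
    intro i
    rw [hu i]
    simp only [map_sub, ContinuousLinearMap.sub_apply]
    ring
  -- expansion of L c
  have hLc : L c = (∑ i, v i * L (u i)) + L (Pi.single (Fin.last m) (1:ℝ)) := by
    rw [hcu, map_add, map_sum]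
    simp only [_root_.map_smul, smul_eq_mul]
  have hLui : ∀ i : Fin (m + 1 - 1), L (u i)
      = L (Pi.single (Fin.castSucc i) (1:ℝ)) - L (Pi.single (Fin.last m) (1:ℝ)) :=
    fun i => by rw [hu i, map_sub]
  -- expansion of B c c
  have hBS : ∀ X, B X c = (∑ j, v j * B X (u j)) + B X (Pi.single (Fin.last m) (1:ℝ)) := by
    intro X
    rw [hcu, map_add, map_sum]
    simp only [_root_.map_smul, smul_eq_mul]
  have hBcc : B c c
      = (∑ i, v i * ((∑ j, v j * B (u i) (u j)) + B (u i) (Pi.single (Fin.last m) (1:ℝ))))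
        + ((∑ j, v j * B (Pi.single (Fin.last m) (1:ℝ)) (u j))
          + B (Pi.single (Fin.last m) (1:ℝ)) (Pi.single (Fin.last m) (1:ℝ))) := by
    have h0 : B c = (∑ i, v i • B (u i)) + B (Pi.single (Fin.last m) (1:ℝ)) := by
      rw [hcu, map_add, map_sum]
      simp only [_root_.map_smul]
    calc B c c = ((∑ i, v i • B (u i)) + B (Pi.single (Fin.last m) (1:ℝ))) c := by rw [h0]
    _ = (∑ i, v i * B (u i) c) + B (Pi.single (Fin.last m) (1:ℝ)) c := by
        simp [ContinuousLinearMap.sum_apply]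
    _ = _ := by
        rw [hBS]
        refine congrArg₂ (· + ·) (Finset.sum_congr rfl fun i _ => ?_) rfl
        rw [hBS]
  -- the quadratic identity
  have hC2 : B c c + (∑ i, v i * (1 - v i) * B (u i) (u i))
      - 2 * (∑ i, ∑ j, if i < j then v i * v j * B (u i) (u j) else 0)
      = (∑ i, v i * B (Pi.single (Fin.castSucc i) (1:ℝ)) (Pi.single (Fin.castSucc i) (1:ℝ)))
        + (1 - ∑ i, v i)
          * B (Pi.single (Fin.last m) (1:ℝ)) (Pi.single (Fin.last m) (1:ℝ)) := by
    have hoff := offdiag_sum (fun i j => v i * v j * B (u i) (u j))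
      (fun i j => by
        show v i * v j * B (u i) (u j) = v j * v i * B (u j) (u i)
        rw [hsym (u i) (u j)]; ring)
    have h1 : (∑ i, v i * ((∑ j, v j * B (u i) (u j)) + B (u i) (Pi.single (Fin.last m) (1:ℝ))))
        = (∑ i, ∑ j, v i * v j * B (u i) (u j))
          + ∑ i, v i * B (u i) (Pi.single (Fin.last m) (1:ℝ)) := by
      rw [← Finset.sum_add_distrib]
      refine Finset.sum_congr rfl fun i _ => ?_
      rw [mul_add, Finset.mul_sum]
      congr 1
      exact Finset.sum_congr rfl fun j _ => by ring
    have hkey : (∑ i, v i * B (u i) (Pi.single (Fin.last m) (1:ℝ)))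
        + (∑ j, v j * B (Pi.single (Fin.last m) (1:ℝ)) (u j))
        + ((∑ i, v i * (1 - v i) * B (u i) (u i)) + ∑ i, v i * v i * B (u i) (u i))
        = (∑ i, v i * B (Pi.single (Fin.castSucc i) (1:ℝ)) (Pi.single (Fin.castSucc i) (1:ℝ)))
          - (∑ i, v i)
            * B (Pi.single (Fin.last m) (1:ℝ)) (Pi.single (Fin.last m) (1:ℝ)) := by
      have hstep : (∑ i, v i * B (u i) (Pi.single (Fin.last m) (1:ℝ)))
          + (∑ j, v j * B (Pi.single (Fin.last m) (1:ℝ)) (u j))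
          + ((∑ i, v i * (1 - v i) * B (u i) (u i)) + ∑ i, v i * v i * B (u i) (u i))
          = ∑ i, (v i * B (Pi.single (Fin.castSucc i) (1:ℝ)) (Pi.single (Fin.castSucc i) (1:ℝ))
              - v i * B (Pi.single (Fin.last m) (1:ℝ)) (Pi.single (Fin.last m) (1:ℝ))) := by
        rw [← Finset.sum_add_distrib, ← Finset.sum_add_distrib, ← Finset.sum_add_distrib]
        exact Finset.sum_congr rfl fun i _ => by linear_combination v i * hcross i
      rw [hstep, Finset.sum_sub_distrib, ← Finset.sum_mul]
    rw [hBcc, h1]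
    linarith [hoff, hkey]
  -- the linear identity
  have hΛsplit : (∑ l, Λ l) = (∑ i : Fin (m + 1 - 1), Λ (Fin.castSucc i)) + Λ (Fin.last m) :=
    Fin.sum_univ_castSucc Λ
  have hC1 : (∑ l, Λ l) * L c
      + (∑ i, (Λ (Fin.castLE (Nat.sub_le (m + 1) 1) i) - (∑ l, Λ l) * v i) * L (u i))
      = (∑ i : Fin (m + 1 - 1), Λ (Fin.castSucc i) * L (Pi.single (Fin.castSucc i) (1:ℝ)))
        + Λ (Fin.last m) * L (Pi.single (Fin.last m) (1:ℝ)) := by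
    have hgoal1 : (∑ i, (Λ (Fin.castLE (Nat.sub_le (m + 1) 1) i) - (∑ l, Λ l) * v i) * L (u i))
        = ∑ i : Fin (m + 1 - 1), (Λ (Fin.castSucc i) - (∑ l, Λ l) * v i) * L (u i) := rfl
    have hh : (∑ i : Fin (m + 1 - 1), (Λ (Fin.castSucc i) - (∑ l, Λ l) * v i) * L (u i))
        = (∑ i : Fin (m + 1 - 1), Λ (Fin.castSucc i) * L (u i)) - (∑ l, Λ l) * (∑ i, v i * L (u i)) := by
      rw [Finset.mul_sum, ← Finset.sum_sub_distrib]
      exact Finset.sum_congr rfl fun i _ => by ring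
    have h2 : (∑ i : Fin (m + 1 - 1), Λ (Fin.castSucc i) * L (u i))
        = (∑ i : Fin (m + 1 - 1), Λ (Fin.castSucc i) * L (Pi.single (Fin.castSucc i) (1:ℝ)))
          - (∑ i : Fin (m + 1 - 1), Λ (Fin.castSucc i)) * L (Pi.single (Fin.last m) (1:ℝ)) := by
      rw [Finset.sum_mul, ← Finset.sum_sub_distrib]
      exact Finset.sum_congr rfl fun i _ => by rw [hLui i]; ring
    rw [hgoal1, hh, hLc, h2, hΛsplit]
    ring
  -- the Bessel operator expanded
  have hLHS : besselOp Λ F (strTheta (m + 1) t v)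
      = t * (∑ i, v i * B (Pi.single (Fin.castSucc i) (1:ℝ)) (Pi.single (Fin.castSucc i) (1:ℝ)))
        + (∑ i : Fin (m + 1 - 1), Λ (Fin.castSucc i) * L (Pi.single (Fin.castSucc i) (1:ℝ)))
        + (t * (1 - ∑ i, v i)
            * B (Pi.single (Fin.last m) (1:ℝ)) (Pi.single (Fin.last m) (1:ℝ))
          + Λ (Fin.last m) * L (Pi.single (Fin.last m) (1:ℝ))) := by
    have hxι : ∀ i : Fin (m + 1 - 1), strTheta (m + 1) t v (Fin.castSucc i) = t * v i := by
      intro i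
      rw [hθt]
      have : c (Fin.castSucc i) = v i := by
        rw [hcdef]; dsimp only
        rw [dif_pos (by simpa using i.is_lt)]
        try exact congrArg v (Fin.ext (by simp))
      simp [this]
    have hxl : strTheta (m + 1) t v (Fin.last m) = t * (1 - ∑ i, v i) := by
      rw [hθt]
      have : c (Fin.last m) = 1 - ∑ i, v i := by
        rw [hcdef]; dsimp only
        rw [dif_neg (by simp)]
      simp [this]
    unfold besselOp
    rw [Fin.sum_univ_castSucc (n := m)
      (f := fun k => strTheta (m + 1) t v k * pderiv1 k (pderiv1 k F) (strTheta (m + 1) t v)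
        + Λ k * pderiv1 k F (strTheta (m + 1) t v))]
    rw [Finset.sum_add_distrib]
    rw [hb1, hb2, hxl]
    refine congrArg₂ (· + ·) (congrArg₂ (· + ·) ?_ ?_) rfl
    · rw [Finset.mul_sum]
      refine Finset.sum_congr rfl fun i _ => ?_
      rw [hb2, hxι i]; ring
    · refine Finset.sum_congr rfl fun i _ => ?_
      rw [hb1]
  -- rewrite the pderiv sums
  have hS1 : (∑ i, v i * (1 - v i)
        * pderiv1 i (pderiv1 i fun w => F (strTheta (m + 1) t w)) v)
      = t * t * (∑ i, v i * (1 - v i) * B (u i) (u i)) := by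
    rw [Finset.mul_sum]
    exact Finset.sum_congr rfl fun i _ => by rw [hp2 i i]; ring
  have hS2 : (∑ i, ∑ j, if i < j then
        v i * v j * pderiv1 i (pderiv1 j fun w => F (strTheta (m + 1) t w)) v else 0)
      = t * t * (∑ i, ∑ j, if i < j then v i * v j * B (u i) (u j) else 0) := by
    rw [Finset.mul_sum]
    refine Finset.sum_congr rfl fun i _ => ?_
    rw [Finset.mul_sum]
    refine Finset.sum_congr rfl fun j _ => ?_
    split_ifs with h
    · rw [hp2 i j]; ring
    · ring
  have hS3 : (∑ i, (Λ (Fin.castLE (Nat.sub_le (m + 1) 1) i) - (∑ l, Λ l) * v i)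
        * pderiv1 i (fun w => F (strTheta (m + 1) t w)) v)
      = t * (∑ i, (Λ (Fin.castLE (Nat.sub_le (m + 1) 1) i) - (∑ l, Λ l) * v i) * L (u i)) := by
    rw [Finset.mul_sum]
    refine Finset.sum_congr rfl fun i _ => ?_
    rw [hp1 v hx₀U i, ← hLdef]
    ring
  rw [hLHS, hd1, hd2, hS1, hS2, hS3]
  set TQ := ∑ i, v i * B (Pi.single (Fin.castSucc i) (1:ℝ)) (Pi.single (Fin.castSucc i) (1:ℝ))
  set TP := ∑ i : Fin (m + 1 - 1), Λ (Fin.castSucc i) * L (Pi.single (Fin.castSucc i) (1:ℝ))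
  set Qe := B (Pi.single (Fin.last m) (1:ℝ)) (Pi.single (Fin.last m) (1:ℝ))
  set Pl := L (Pi.single (Fin.last m) (1:ℝ))
  set A1 := ∑ i, v i * (1 - v i) * B (u i) (u i)
  set ITE := ∑ i, ∑ j, if i < j then v i * v j * B (u i) (u j) else 0
  set S3L := ∑ i, (Λ (Fin.castLE (Nat.sub_le (m + 1) 1) i) - (∑ l, Λ l) * v i) * L (u i)
  have ht' : t ≠ 0 := ne_of_gt ht
  have hdiv : (1 / t) * (t * t * A1 - 2 * (t * t * ITE) + t * S3L)
      = t * A1 - 2 * (t * ITE) + S3L := by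
    field_simp
  rw [hdiv]
  linear_combination -t * hC2 - hC1
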